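/- If i and j are indices with τ(i,j) ≤ π/2, then the diameter of the point set {v_i, v_{i+1}, …, v_j} is attained by the pair (v_i, v_j); that is, for all k, l ∈ ⟨i..j⟩, dist(v_k, v_l) ≤ dist(v_i, v_j). -/

import Mathlib

noncomputable section

namespace BNC

/-- The Euclidean plane. -/
abbrev Pt : Type := EuclideanSpace ℝ (Fin 2)

/-- Planar cross product (determinant) of two vectors. -/
def cross (u w : Pt) : ℝ := u 0 * w 1 - u 1 * w 0

/-- `v` lists points in strictly convex position in counterclockwise order:
every point distinct from `v i` and `v (i+1)` lies strictly to the left of the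
directed line from `v i` to `v (i+1)`.  (This also forces no three of the
points to be collinear.) -/
def ConvexCCW {n : ℕ} (v : ZMod n → Pt) : Prop :=
  ∀ i j : ZMod n, j ≠ i → j ≠ i + 1 → 0 < cross (v (i + 1) - v i) (v j - v i)

/-- The cyclic arc of indices `i, i+1, …, j` (mod `n`). -/
def arc {n : ℕ} (i j : ZMod n) : Finset (ZMod n) :=
  Finset.image (fun t : ℕ => i + (t : ZMod n)) (Finset.range ((j - i).val + 1))

/-- The turning angle `τ(i,j)`: the sum over `k ∈ ⟨i+1..j−1⟩` of the unsigned
angle between `v (k+1) − v k` and `v k − v (k−1)`. -/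
def tau {n : ℕ} (v : ZMod n → Pt) (i j : ZMod n) : ℝ :=
  ∑ k ∈ arc (i + 1) (j - 1),
    InnerProductGeometry.angle (v (k + 1) - v k) (v k - v (k - 1))

/-- The length of the segment joining the two points of an unordered pair. -/
def pairDist {n : ℕ} (v : ZMod n → Pt) : Sym2 (ZMod n) → ℝ :=
  Sym2.lift ⟨fun a b => dist (v a) (v b), fun a b => dist_comm (v a) (v b)⟩

/-- The closed segment joining the two points of an unordered pair. -/
def pairSeg {n : ℕ} (v : ZMod n → Pt) : Sym2 (ZMod n) → Set Pt :=
  Sym2.lift ⟨fun a b => segment ℝ (v a) (v b), fun a b => segment_symm ℝ (v a) (v b)⟩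

/-- `M` is a perfect matching of the index set `A`: a set of non-degenerate
unordered pairs of indices from `A` such that every index of `A` belongs to
exactly one pair. -/
def IsMatchingOn {n : ℕ} (A : Set (ZMod n)) (M : Set (Sym2 (ZMod n))) : Prop :=
  (∀ e ∈ M, ¬ e.IsDiag) ∧ (∀ e ∈ M, ∀ k, k ∈ e → k ∈ A) ∧
    (∀ k ∈ A, ∃! e, e ∈ M ∧ k ∈ e)

/-- The closed segments of distinct pairs of `M` are pairwise disjoint. -/
def NonCrossing {n : ℕ} (v : ZMod n → Pt) (M : Set (Sym2 (ZMod n))) : Prop :=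
  ∀ e ∈ M, ∀ e' ∈ M, e ≠ e' → Disjoint (pairSeg v e) (pairSeg v e')

/-- The bottleneck value of a matching: the maximal segment length. -/
def bnM {n : ℕ} (v : ZMod n → Pt) (M : Set (Sym2 (ZMod n))) : ℝ :=
  sSup (pairDist v '' M)

/-- A non-crossing perfect matching of the whole point set. -/
def IsNCMatching {n : ℕ} (v : ZMod n → Pt) (M : Set (Sym2 (ZMod n))) : Prop :=
  IsMatchingOn Set.univ M ∧ NonCrossing v M

/-- A bottleneck matching: a non-crossing matching minimizing the bottleneck value. -/
def IsBottleneck {n : ℕ} (v : ZMod n → Pt) (M : Set (Sym2 (ZMod n))) : Prop :=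
  IsNCMatching v M ∧ ∀ M', IsNCMatching v M' → bnM v M ≤ bnM v M'

/-- A pair is an edge of the full polygon iff it is of the form `{k, k+1}`. -/
def IsPolyEdge {n : ℕ} (e : Sym2 (ZMod n)) : Prop := ∃ k : ZMod n, e = s(k, k + 1)

/-- The diagonals of a matching of the full point set. -/
def fullDiags {n : ℕ} (M : Set (Sym2 (ZMod n))) : Set (Sym2 (ZMod n)) :=
  {e ∈ M | ¬ IsPolyEdge e}

/-- The full polygon: the convex hull of all the points. -/
def fullPoly {n : ℕ} (v : ZMod n → Pt) : Set Pt := convexHull ℝ (Set.range v)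

/-- The interior of the polygon `Poly` minus the union of the segments of the
diagonals from `D`. -/
def regionSpace {n : ℕ} (v : ZMod n → Pt) (Poly : Set Pt) (D : Set (Sym2 (ZMod n))) :
    Set Pt :=
  interior Poly \ ⋃ e ∈ D, pairSeg v e

/-- `R` is a region: the closure of a connected component of the interior of the
polygon minus the union of the diagonal segments. -/
def IsRegion {n : ℕ} (v : ZMod n → Pt) (Poly : Set Pt) (D : Set (Sym2 (ZMod n)))
    (R : Set Pt) : Prop :=
  ∃ x ∈ regionSpace v Poly D, R = closure (connectedComponentIn (regionSpace v Poly D) x)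

/-- The diagonals from `D` whose segment lies on the boundary of `R`. -/
def boundDiags {n : ℕ} (v : ZMod n → Pt) (Poly : Set Pt) (D : Set (Sym2 (ZMod n)))
    (R : Set Pt) : Set (Sym2 (ZMod n)) :=
  {e ∈ D | pairSeg v e ⊆ frontier R}

/-- `R` is a region bounded by exactly `k` diagonals. -/
def KBounded {n : ℕ} (v : ZMod n → Pt) (Poly : Set Pt) (D : Set (Sym2 (ZMod n)))
    (R : Set Pt) (k : ℕ) : Prop :=
  IsRegion v Poly D R ∧ (boundDiags v Poly D R).ncard = k

/-- The graph whose vertices are the diagonals of `D`, two being adjacent iff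
some 2-bounded region has both on its boundary. -/
def cascadeGraph {n : ℕ} (v : ZMod n → Pt) (Poly : Set Pt) (D : Set (Sym2 (ZMod n))) :
    SimpleGraph D where
  Adj a b := a ≠ b ∧ ∃ R : Set Pt, KBounded v Poly D R 2 ∧
      pairSeg v a.1 ⊆ frontier R ∧ pairSeg v b.1 ⊆ frontier R
  symm := by
    refine ⟨?_⟩
    rintro a b ⟨hab, R, h1, h2, h3⟩
    exact ⟨hab.symm, R, h1, h3, h2⟩
  loopless := by refine ⟨?_⟩; rintro a ⟨h, -⟩; exact h rfl

/-- The number of cascades: the number of connected components of the cascade graph. -/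
def cascadeCount {n : ℕ} (v : ZMod n → Pt) (Poly : Set Pt) (D : Set (Sym2 (ZMod n))) : ℕ :=
  Nat.card (cascadeGraph v Poly D).ConnectedComponent

/-- A pair is a diagonal relative to the arc `⟨i..j⟩` iff it is neither `{i,j}`
nor of the form `{k, k+1}` with both `k` and `k+1` in the arc. -/
def ArcDiag {n : ℕ} (i j : ZMod n) (e : Sym2 (ZMod n)) : Prop :=
  e ≠ s(i, j) ∧ ∀ k : ZMod n, k ∈ arc i j → k + 1 ∈ arc i j → e ≠ s(k, k + 1)

/-- The convex hull of the points of the arc `⟨i..j⟩`. -/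
def arcPoly {n : ℕ} (v : ZMod n → Pt) (i j : ZMod n) : Set Pt :=
  convexHull ℝ (v '' (arc i j : Set (ZMod n)))

/-- The diagonals (relative to the arc `⟨i..j⟩`) of a matching `M`. -/
def arcDiags {n : ℕ} (i j : ZMod n) (M : Set (Sym2 (ZMod n))) : Set (Sym2 (ZMod n)) :=
  {e ∈ M | ArcDiag i j e}

/-- `M` is admissible for the subproblem `Matching(i,j)`: it is a non-crossing
perfect matching of the points of the arc `⟨i..j⟩`, it has at most one cascade,
and any region whose boundary contains the segment `[v i, v j]` has at most one
diagonal of `M` on its boundary. -/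
def Admissible {n : ℕ} (v : ZMod n → Pt) (i j : ZMod n) (M : Set (Sym2 (ZMod n))) : Prop :=
  IsMatchingOn (↑(arc i j)) M ∧ NonCrossing v M ∧
    cascadeCount v (arcPoly v i j) (arcDiags i j M) ≤ 1 ∧
    ∀ R : Set Pt, IsRegion v (arcPoly v i j) (arcDiags i j M) R →
      segment ℝ (v i) (v j) ⊆ frontier R →
      (boundDiags v (arcPoly v i j) (arcDiags i j M) R).ncard ≤ 1

/-- `S i j`: the optimal value of the subproblem `Matching(i,j)`. -/
def S {n : ℕ} (v : ZMod n → Pt) (i j : ZMod n) : ℝ :=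
  sInf (bnM v '' {M | Admissible v i j M})

/-- The pair `(i,j)` is necessary: every admissible matching attaining `S i j`
contains the pair `{i,j}`. -/
def Necessary {n : ℕ} (v : ZMod n → Pt) (i j : ZMod n) : Prop :=
  ∀ M : Set (Sym2 (ZMod n)), Admissible v i j M → bnM v M = S v i j → s(i, j) ∈ M

/-- The closed right side of the directed line from `v i` to `v j`. -/
def rightClosed {n : ℕ} (v : ZMod n → Pt) (i j : ZMod n) : Set Pt :=
  {P : Pt | cross (v j - v i) (P - v i) ≤ 0}

/-- The region `Π⁺(i,j)`. -/
def PiPlus {n : ℕ} (v : ZMod n → Pt) (i j : ZMod n) : Set Pt :=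
  {P ∈ rightClosed v i j |
    Real.pi / 3 ≤ EuclideanGeometry.angle (v i) P (v j) ∧ dist (v i) (v j) ≤ dist P (v i)}

/-- The region `Π⁻(i,j)`. -/
def PiMinus {n : ℕ} (v : ZMod n → Pt) (i j : ZMod n) : Set Pt :=
  {P ∈ rightClosed v i j |
    Real.pi / 3 ≤ EuclideanGeometry.angle (v i) P (v j) ∧ dist (v i) (v j) ≤ dist P (v j)}

/-- `(i,j)` is a feasible pair: the arc `⟨i..j⟩` has an even number of points. -/
def Feasible {n : ℕ} (i j : ZMod n) : Prop := Even (arc i j).card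

/-- `(i,j)` is a diagonal pair (not an edge, not degenerate). -/
def IsDiagPair {n : ℕ} (i j : ZMod n) : Prop := i ≠ j ∧ j ≠ i + 1 ∧ i ≠ j + 1

/-- `(i,j)` is a candidate diagonal: a feasible diagonal that is necessary and
whose turning angle is at most `2π/3`. -/
def Candidate {n : ℕ} (v : ZMod n → Pt) (i j : ZMod n) : Prop :=
  Feasible i j ∧ IsDiagPair i j ∧ Necessary v i j ∧ tau v i j ≤ 2 * Real.pi / 3

end BNC

section AuxStmt1

open Real InnerProductGeometry Finset

private lemma abs_toReal_coe_le' (x : ℝ) : |((x : Real.Angle)).toReal| ≤ |x| := by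
  set y := ((x : Real.Angle)).toReal with hy
  have h1 : ((y : ℝ) : Real.Angle) = (x : Real.Angle) := by
    rw [hy, Real.Angle.coe_toReal]
  obtain ⟨m, hm⟩ := Real.Angle.angle_eq_iff_two_pi_dvd_sub.mp h1
  have hyπ : |y| ≤ π := Real.Angle.abs_toReal_le_pi _
  rcases eq_or_ne m 0 with h0 | h0
  · rw [h0] at hm; push_cast at hm
    have : y = x := by linarith
    rw [this]
  · have h1m : (1 : ℝ) ≤ |(m : ℝ)| := by
      rw [← Int.cast_abs]; exact_mod_cast Int.one_le_abs h0
    have h2 : 2 * π ≤ |2 * π * (m : ℝ)| := by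
      rw [abs_mul, abs_of_pos (by positivity : (0:ℝ) < 2 * π)]
      nlinarith [Real.pi_pos]
    have h3 : |2 * π * (m : ℝ)| - |y| ≤ |x| := by
      have : |2 * π * (m : ℝ)| = |y - x| := by rw [hm]
      rw [this]
      have := abs_sub_abs_le_abs_sub (y - x) y
      simp only [sub_sub_cancel_left, abs_neg] at this
      linarith
    linarith [Real.pi_pos]

private lemma angle_tri' (x y z : BNC.Pt) (hx : x ≠ 0) (hy : y ≠ 0) (hz : z ≠ 0) :
    InnerProductGeometry.angle x z ≤
      InnerProductGeometry.angle x y + InnerProductGeometry.angle y z := by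
  haveI : Fact (Module.finrank ℝ BNC.Pt = 2) := ⟨finrank_euclideanSpace_fin⟩
  let o : Orientation ℝ BNC.Pt (Fin 2) := (EuclideanSpace.basisFun (Fin 2) ℝ).toBasis.orientation
  rw [o.angle_eq_abs_oangle_toReal hx hz, o.angle_eq_abs_oangle_toReal hx hy,
      o.angle_eq_abs_oangle_toReal hy hz, ← o.oangle_add hx hy hz]
  have key : o.oangle x y + o.oangle y z =
      (((o.oangle x y).toReal + (o.oangle y z).toReal : ℝ) : Real.Angle) := by
    rw [Real.Angle.coe_add, Real.Angle.coe_toReal, Real.Angle.coe_toReal]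
  rw [key]
  exact le_trans (abs_toReal_coe_le' _) (abs_add_le _ _)

private lemma edge_ne' (n : ℕ) [NeZero n] (hn : 4 ≤ n) (v : ZMod n → BNC.Pt)
    (hv : BNC.ConvexCCW v) (k : ZMod n) : v (k + 1) - v k ≠ 0 := by
  intro h0
  have h2 : ((2 : ℕ) : ZMod n) ≠ 0 := by
    rw [Ne, ZMod.natCast_eq_zero_iff]
    exact fun h => absurd (Nat.le_of_dvd (by norm_num) h) (by omega)
  have h1 : ((1 : ℕ) : ZMod n) ≠ 0 := by
    rw [Ne, ZMod.natCast_eq_zero_iff]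
    exact fun h => absurd (Nat.le_of_dvd (by norm_num) h) (by omega)
  have hne1 : k + 2 ≠ k := by
    intro h
    apply h2
    push_cast
    linear_combination h
  have hne2 : k + 2 ≠ k + 1 := by
    intro h
    apply h1
    push_cast
    linear_combination h
  have := hv k (k + 2) hne1 hne2
  rw [h0] at this
  simp [BNC.cross] at this

end AuxStmt1

/-- If `τ(i,j) ≤ π/2` then the diameter of `{v i, …, v j}` is attained by the
pair `(v i, v j)`. -/
theorem stmt1 (n : ℕ) [NeZero n] (hn : 4 ≤ n) (hEven : Even n)
    (v : ZMod n → BNC.Pt) (hv : BNC.ConvexCCW v)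
    (i j : ZMod n) (h : BNC.tau v i j ≤ Real.pi / 2) :
    ∀ k ∈ BNC.arc i j, ∀ l ∈ BNC.arc i j, dist (v k) (v l) ≤ dist (v i) (v j) := by
  classical
  have hEnz : ∀ k : ZMod n, v (k + 1) - v k ≠ 0 := edge_ne' n hn v hv
  set d := (j - i).val with hd
  have hdn : d < n := ZMod.val_lt _
  have hij : i + (d : ZMod n) = j := by
    rw [hd, ZMod.natCast_rightInverse (j - i)]; ring
  set E : ℕ → BNC.Pt := fun r => v (i + (r : ZMod n) + 1) - v (i + (r : ZMod n)) with hE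
  have hEnz' : ∀ r : ℕ, E r ≠ 0 := fun r => hEnz (i + (r : ZMod n))
  have hchain : ∀ t s : ℕ, t ≤ s →
      InnerProductGeometry.angle (E t) (E s) ≤
        ∑ r ∈ Finset.Ico t s, InnerProductGeometry.angle (E (r + 1)) (E r) := by
    intro t s hts
    induction s, hts using Nat.le_induction with
    | base => simp [InnerProductGeometry.angle_self (hEnz' t)]
    | succ s hts ih =>
      rw [Finset.sum_Ico_succ_top hts]
      calc InnerProductGeometry.angle (E t) (E (s + 1))
          ≤ InnerProductGeometry.angle (E t) (E s)
              + InnerProductGeometry.angle (E s) (E (s + 1)) :=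
            angle_tri' _ _ _ (hEnz' t) (hEnz' s) (hEnz' (s + 1))
        _ ≤ _ := by
            rw [InnerProductGeometry.angle_comm (E s) (E (s + 1))]
            exact add_le_add ih le_rfl
  have htau0 : 0 ≤ BNC.tau v i j :=
    Finset.sum_nonneg fun k _ => InnerProductGeometry.angle_nonneg _ _
  have hsum : ∀ t s : ℕ, s < d →
      ∑ r ∈ Finset.Ico t s, InnerProductGeometry.angle (E (r + 1)) (E r) ≤ BNC.tau v i j := by
    intro t s hs
    rcases Nat.lt_or_ge d 2 with hd2 | hd2
    · have hs0 : s = 0 := by omega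
      subst hs0
      simpa using htau0
    · have key : BNC.tau v i j
          = ∑ r ∈ Finset.range (d - 1), InnerProductGeometry.angle (E (r + 1)) (E r) := by
        rw [BNC.tau, BNC.arc]
        have h1 : (j - 1) - (i + 1) = ((d - 2 : ℕ) : ZMod n) := by
          have h2 : ((d - 2 : ℕ) : ZMod n) = (d : ZMod n) - 2 := by
            push_cast [Nat.cast_sub hd2]
            ring
          rw [h2, hd, ZMod.natCast_rightInverse (j - i)]
          ring
        rw [h1, ZMod.val_cast_of_lt (by omega : d - 2 < n)]
        have hrange : d - 2 + 1 = d - 1 := by omega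
        rw [hrange]
        rw [Finset.sum_image (by
          intro a ha b hb hab
          have h2 := add_left_cancel hab
          have h3 := congrArg ZMod.val h2
          rw [ZMod.val_cast_of_lt (by simp at ha; omega),
            ZMod.val_cast_of_lt (by simp at hb; omega)] at h3
          exact h3)]
        apply Finset.sum_congr rfl
        intro r _
        have hA : E (r + 1) = v (i + 1 + (r : ZMod n) + 1) - v (i + 1 + (r : ZMod n)) := by
          simp only [hE]
          have e : i + ((r + 1 : ℕ) : ZMod n) = i + 1 + (r : ZMod n) := by push_cast; ring
          rw [e]
        have hB : E r = v (i + 1 + (r : ZMod n)) - v (i + 1 + (r : ZMod n) - 1) := by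
          simp only [hE]
          have e1 : i + (r : ZMod n) + 1 = i + 1 + (r : ZMod n) := by ring
          have e2 : i + (r : ZMod n) = i + 1 + (r : ZMod n) - 1 := by ring
          rw [e1, e2]
        rw [hA, hB]
      rw [key]
      apply Finset.sum_le_sum_of_subset_of_nonneg
      · intro r hr
        simp only [Finset.mem_Ico] at hr
        simp only [Finset.mem_range]
        omega
      · intro r _ _
        exact InnerProductGeometry.angle_nonneg _ _
  have hang : ∀ t s : ℕ, t ≤ s → s < d →
      InnerProductGeometry.angle (E t) (E s) ≤ Real.pi / 2 :=
    fun t s hts hs => le_trans (hchain t s hts) (le_trans (hsum t s hs) h)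
  have hinner : ∀ t s : ℕ, t < d → s < d → (0 : ℝ) ≤ inner ℝ (E t) (E s) := by
    have base : ∀ t s : ℕ, t ≤ s → s < d → (0 : ℝ) ≤ inner ℝ (E t) (E s) := by
      intro t s hts hs
      have hcos : 0 ≤ Real.cos (InnerProductGeometry.angle (E t) (E s)) :=
        Real.cos_nonneg_of_mem_Icc
          ⟨by linarith [InnerProductGeometry.angle_nonneg (E t) (E s), Real.pi_pos],
            hang t s hts hs⟩
      have hmul := InnerProductGeometry.cos_angle_mul_norm_mul_norm (E t) (E s)
      rw [← hmul]
      exact mul_nonneg hcos (by positivity)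
    intro t s ht hs
    rcases le_total t s with h' | h'
    · exact base t s h' hs
    · rw [real_inner_comm]; exact base s t h' ht
  have htel : ∀ p q : ℕ, p ≤ q →
      v (i + (q : ZMod n)) - v (i + (p : ZMod n)) = ∑ r ∈ Finset.Ico p q, E r := by
    intro p q hpq
    rw [Finset.sum_Ico_eq_sum_range]
    have hterm : ∀ r : ℕ, E (p + r) =
        (fun s : ℕ => v (i + ((p + s : ℕ) : ZMod n))) (r + 1)
          - (fun s : ℕ => v (i + ((p + s : ℕ) : ZMod n))) r := by
      intro r
      simp only [hE]
      congr 2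
      push_cast
      ring
    rw [Finset.sum_congr rfl (fun r _ => hterm r),
      Finset.sum_range_sub (fun s : ℕ => v (i + ((p + s : ℕ) : ZMod n)))]
    have e1 : p + (q - p) = q := by omega
    simp only [e1, Nat.add_zero]
  have main : ∀ p q : ℕ, p ≤ q → q ≤ d →
      dist (v (i + (p : ZMod n))) (v (i + (q : ZMod n))) ≤ dist (v i) (v j) := by
    intro p q hpq hqd
    set u : BNC.Pt := v (i + (q : ZMod n)) - v (i + (p : ZMod n)) with hu
    have hu' : u = ∑ r ∈ Finset.Ico p q, E r := htel p q hpq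
    have hAq : ∀ m : ℕ, m < d → (0 : ℝ) ≤ inner ℝ (E m) u := by
      intro m hm
      rw [hu', inner_sum]
      refine Finset.sum_nonneg fun r hr => hinner m r hm ?_
      simp only [Finset.mem_Ico] at hr
      omega
    have hfull : v j - v i = ∑ r ∈ Finset.range d, E r := by
      have h0 := htel 0 d (Nat.zero_le d)
      rw [hij, Nat.cast_zero, add_zero] at h0
      rw [Finset.range_eq_Ico]
      exact h0
    have hB : ‖u‖ ^ 2 ≤ (inner ℝ (v j - v i) u : ℝ) := by
      have h1 : ‖u‖ ^ 2 = ∑ r ∈ Finset.Ico p q, (inner ℝ (E r) u : ℝ) := by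
        rw [← real_inner_self_eq_norm_sq]
        nth_rewrite 1 [hu']
        rw [sum_inner]
      rw [h1, hfull, sum_inner]
      apply Finset.sum_le_sum_of_subset_of_nonneg
      · intro r hr
        simp only [Finset.mem_Ico] at hr
        simp only [Finset.mem_range]
        omega
      · intro r hr _
        simp only [Finset.mem_range] at hr
        exact hAq r hr
    have hC : (inner ℝ (v j - v i) u : ℝ) ≤ ‖v j - v i‖ * ‖u‖ := real_inner_le_norm _ _
    have hnorm : ‖u‖ ≤ ‖v j - v i‖ := by
      rcases eq_or_lt_of_le (norm_nonneg u) with h0 | h0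
      · rw [← h0]; exact norm_nonneg _
      · nlinarith
    rw [dist_eq_norm]
    have hrev : ‖v (i + (p : ZMod n)) - v (i + (q : ZMod n))‖ = ‖u‖ := by
      rw [hu, norm_sub_rev]
    rw [hrev]
    calc ‖u‖ ≤ ‖v j - v i‖ := hnorm
      _ = dist (v i) (v j) := by rw [dist_eq_norm, norm_sub_rev]
  intro k hk l hl
  rw [BNC.arc, Finset.mem_image] at hk hl
  obtain ⟨p, hp, rfl⟩ := hk
  obtain ⟨q, hq, rfl⟩ := hl
  rw [Finset.mem_range, ← hd] at hp hq
  rcases le_total p q with hpq | hpq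
  · exact main p q hpq (by omega)
  · rw [dist_comm]; exact main q p hpq (by omega)
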